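/- Let q and q′ be relatively prime positive integers and let r, r′, p, p′ be arbitrary integers. Set v₁ = (r/q + 1/(qq′), r′/q′ + 1/(qq′)) and v₂ = ((r+p)/q + 1/(qq′), (r′+p′)/q′ + 1/(qq′)). Then, regarded as subsets of the quotient torus ℝ²/((1/q)ℤ × (1/q′)ℤ), the qq′ translates of the open square (0, 1/(qq′)) × (0, 1/(qq′)) by the vectors k·v₁, for 0 ≤ k < qq′, are pairwise disjoint; the same holds for the translates by k·v₂, 0 ≤ k < qq′. Moreover, for every pair (i,j) with 0 ≤ i < q′ and 0 ≤ j < q there is exactly one k with 0 ≤ k < qq′ — namely the unique such k with k ≡ i (mod q′) and k ≡ j (mod q) — for which k·v₁ ≡ (i/(qq′), j/(qq′)) modulo (1/q)ℤ × (1/q′)ℤ, and the same k is the unique one with k·v₂ ≡ (i/(qq′), j/(qq′)) modulo (1/q)ℤ × (1/q′)ℤ. -/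

import Mathlib

open Set

noncomputable section

/-- Projection from `ℝ²` onto the quotient torus `ℝ²/((a)ℤ × (b)ℤ)`. -/
def projTorus (a b : ℝ) : ℝ × ℝ → AddCircle a × AddCircle b :=
  fun p => (↑p.1, ↑p.2)

private lemma torus_coe_eq_iff (c : ℝ) (x y : ℝ) :
    ((x : AddCircle c) = (y : AddCircle c)) ↔ ∃ m : ℤ, x - y = m * c := by
  rw [QuotientAddGroup.eq_iff_sub_mem, AddSubgroup.mem_zmultiples_iff]
  simp only [zsmul_eq_mul, eq_comm]

private lemma torus_key0 (q q' : ℕ) (hq : 0 < q) (hq' : 0 < q') (x x' : ℝ)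
    (hx : x ∈ Ioo (0:ℝ) (1 / ((q:ℝ) * q'))) (hx' : x' ∈ Ioo (0:ℝ) (1 / ((q:ℝ) * q')))
    (a : ℤ) (h : x - x' = a / ((q:ℝ) * q')) : a = 0 := by
  have hqq : (0:ℝ) < (q:ℝ) * q' := by positivity
  have h1 : |x - x'| < 1 / ((q:ℝ) * q') := by
    rw [abs_sub_lt_iff]
    constructor <;> [linarith [hx.1, hx.2, hx'.1, hx'.2]; linarith [hx.1, hx.2, hx'.1, hx'.2]]
  rw [h, abs_div, abs_of_pos hqq, div_lt_div_iff₀ hqq hqq, one_mul] at h1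
  have h2 : |(a:ℝ)| < 1 := by nlinarith [abs_nonneg (a:ℝ)]
  have h3 : |a| < 1 := by rw [← Int.cast_abs] at h2; exact_mod_cast h2
  rw [abs_lt] at h3; omega

private lemma torus_disj_comp (q q' : ℕ) (hq : 0 < q) (hq' : 0 < q') (A : ℤ) (k l : ℕ) (x x' : ℝ)
    (hx : x ∈ Ioo (0:ℝ) (1 / ((q:ℝ) * q'))) (hx' : x' ∈ Ioo (0:ℝ) (1 / ((q:ℝ) * q')))
    (h : ((x + (k:ℝ) * ((A:ℝ)/q + 1/((q:ℝ)*q')) : ℝ) : AddCircle (1/(q:ℝ))) =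
      ((x' + (l:ℝ) * ((A:ℝ)/q + 1/((q:ℝ)*q')) : ℝ) : AddCircle (1/(q:ℝ)))) :
    (q':ℤ) ∣ ((k:ℤ) - l) := by
  have hq0 : (q:ℝ) ≠ 0 := Nat.cast_ne_zero.mpr hq.ne'
  have hq'0 : (q':ℝ) ≠ 0 := Nat.cast_ne_zero.mpr hq'.ne'
  have hqq'0 : ((q:ℝ)*q') ≠ 0 := mul_ne_zero hq0 hq'0
  rw [torus_coe_eq_iff] at h
  obtain ⟨m, hm⟩ := h
  set a : ℤ := (m - ((k:ℤ) - l)*A)*q' - ((k:ℤ) - l) with ha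
  have key2 : (x - x') * ((q:ℝ)*q') * (q:ℝ)^2 = (a:ℝ) * (q:ℝ)^2 := by
    rw [ha]
    push_cast
    field_simp at hm
    linear_combination (q:ℝ)^2 * hm
  have key : x - x' = (a:ℝ) / ((q:ℝ)*q') := by
    rw [eq_div_iff hqq'0]
    exact mul_right_cancel₀ (pow_ne_zero 2 hq0) key2
  have ha0 : a = 0 := torus_key0 q q' hq hq' x x' hx hx' a key
  have hkl : ((k:ℤ) - l) = (m - ((k:ℤ) - l)*A)*q' := by omega
  exact ⟨(m - ((k:ℤ) - l)*A), by linarith [hkl]⟩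

private lemma torus_comp_iff (q q' : ℕ) (hq : 0 < q) (hq' : 0 < q') (A : ℤ) (k i : ℕ) :
    ((((k:ℝ) * ((A:ℝ)/q + 1/((q:ℝ)*q')) : ℝ) : AddCircle (1/(q:ℝ))) =
      (((i:ℝ)/((q:ℝ)*q') : ℝ) : AddCircle (1/(q:ℝ)))) ↔ (q':ℤ) ∣ ((k:ℤ) - i) := by
  have hq0 : (q:ℝ) ≠ 0 := Nat.cast_ne_zero.mpr hq.ne'
  have hq'0 : (q':ℝ) ≠ 0 := Nat.cast_ne_zero.mpr hq'.ne'
  rw [torus_coe_eq_iff]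
  constructor
  · rintro ⟨m, hm⟩
    refine ⟨m - k*A, ?_⟩
    have hr : ((k:ℤ) - i : ℝ) = (((q':ℤ) * (m - k*A) : ℤ) : ℝ) := by
      push_cast
      field_simp at hm
      have hmc : (((k:ℝ) - i) * ((q:ℝ)^3*q')) = ((q':ℝ)*((m:ℝ) - k*A)) * ((q:ℝ)^3*q') := by
        linear_combination ((q:ℝ)^3*q') * hm
      have hne : ((q:ℝ)^3*q') ≠ 0 := by positivity
      exact mul_right_cancel₀ hne hmc
    exact_mod_cast hr
  · rintro ⟨c, hc⟩
    refine ⟨k*A + c, ?_⟩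
    have hr : ((k:ℤ) - i : ℝ) = (((q':ℤ) * c : ℤ) : ℝ) := by
      exact_mod_cast congrArg (Int.cast : ℤ → ℝ) hc
    push_cast at hr
    field_simp
    push_cast
    first
      | linear_combination (q:ℝ) * hr
      | linear_combination ((q:ℝ)^3*q' - (q:ℝ)) * hr
      | linear_combination ((q:ℝ)^3*q') * hr
      | linear_combination hr

private lemma nat_mod_dvd (q' k i : ℕ) (h : k % q' = i) : (q':ℤ) ∣ ((k:ℤ) - i) := by
  refine ⟨(k / q' : ℕ), ?_⟩
  have h3 : q' * (k / q') + i = k := by rw [← h]; exact Nat.div_add_mod k q'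
  have h4 : ((q':ℤ)) * ((k / q' : ℕ) : ℤ) + (i:ℤ) = (k:ℤ) := by exact_mod_cast h3
  linarith

/-- combinatorics of the translates of the small square by the
vectors `v₁` and `v₂` on the quotient torus `ℝ²/((1/q)ℤ × (1/q′)ℤ)`. -/
theorem torus_translates_disjoint_and_CRT
    (q q' : ℕ) (hq : 0 < q) (hq' : 0 < q') (hco : Nat.Coprime q q')
    (r r' p p' : ℤ) :
    let v₁ : ℝ × ℝ := ((r : ℝ) / q + 1 / ((q : ℝ) * q'), (r' : ℝ) / q' + 1 / ((q : ℝ) * q'))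
    let v₂ : ℝ × ℝ := (((r : ℝ) + p) / q + 1 / ((q : ℝ) * q'),
      ((r' : ℝ) + p') / q' + 1 / ((q : ℝ) * q'))
    let π := projTorus (1 / (q : ℝ)) (1 / (q' : ℝ))
    let Sq : Set (ℝ × ℝ) := Ioo (0 : ℝ) (1 / ((q : ℝ) * q')) ×ˢ Ioo (0 : ℝ) (1 / ((q : ℝ) * q'))
    -- the `q q′` translates of the square by `k • v₁` are pairwise disjoint in the torus
    (∀ k l : ℕ, k < q * q' → l < q * q' → k ≠ l →
        Disjoint (π '' ((fun z => z + (k : ℝ) • v₁) '' Sq))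
          (π '' ((fun z => z + (l : ℝ) • v₁) '' Sq))) ∧
    -- and likewise for the translates by `k • v₂`
    (∀ k l : ℕ, k < q * q' → l < q * q' → k ≠ l →
        Disjoint (π '' ((fun z => z + (k : ℝ) • v₂) '' Sq))
          (π '' ((fun z => z + (l : ℝ) • v₂) '' Sq))) ∧
    -- the CRT statement: for each `(i, j)` the unique `k < q q′` with
    -- `k • v₁ ≡ (i/(qq′), j/(qq′))` is the CRT solution of `k ≡ i (mod q′)`,
    -- `k ≡ j (mod q)`, and the same `k` is the unique solution for `v₂`
    (∀ i j : ℕ, i < q' → j < q →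
      ∃ k : ℕ, k < q * q' ∧ k % q' = i ∧ k % q = j ∧
        (∀ k' : ℕ, k' < q * q' →
          (π ((k' : ℝ) • v₁) = π ((i : ℝ) / ((q : ℝ) * q'), (j : ℝ) / ((q : ℝ) * q')) ↔ k' = k)) ∧
        (∀ k' : ℕ, k' < q * q' →
          (π ((k' : ℝ) • v₂) = π ((i : ℝ) / ((q : ℝ) * q'), (j : ℝ) / ((q : ℝ) * q')) ↔ k' = k))) := by
  intro v₁ v₂ π Sq
  have hcoZ : IsCoprime (q:ℤ) (q':ℤ) := by
    rw [Int.isCoprime_iff_gcd_eq_one, Int.gcd_natCast_natCast]; exact hco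
  have hcomm : ((q:ℝ) * q') = ((q':ℝ) * q) := mul_comm _ _
  -- generic disjointness
  have hdisj : ∀ (A B : ℤ), ∀ k l : ℕ, k < q * q' → l < q * q' → k ≠ l →
      Disjoint (π '' ((fun z => z + (k : ℝ) •
          (((A:ℝ)/q + 1/((q:ℝ)*q'), (B:ℝ)/q' + 1/((q:ℝ)*q')) : ℝ × ℝ)) '' Sq))
        (π '' ((fun z => z + (l : ℝ) •
          (((A:ℝ)/q + 1/((q:ℝ)*q'), (B:ℝ)/q' + 1/((q:ℝ)*q')) : ℝ × ℝ)) '' Sq)) := by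
    intro A B k l hk hl hkl
    set v : ℝ × ℝ := (((A:ℝ)/q + 1/((q:ℝ)*q'), (B:ℝ)/q' + 1/((q:ℝ)*q'))) with hv
    rw [Set.disjoint_left]
    rintro z ⟨w, ⟨x, hx, rfl⟩, hw⟩ ⟨w', ⟨x', hx', rfl⟩, hw'⟩
    have hz : π (x' + (l:ℝ) • v) = π (x + (k:ℝ) • v) := hw'.trans hw.symm
    simp only [π, projTorus, Prod.mk.injEq, Prod.fst_add, Prod.snd_add, Prod.smul_fst,
      Prod.smul_snd, smul_eq_mul] at hz
    obtain ⟨h2, h1⟩ := hz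
    -- note hz : π(x' + l•v) = π(x + k•v)
    have hd1 : (q':ℤ) ∣ ((l:ℤ) - k) :=
      torus_disj_comp q q' hq hq' A l k x'.1 x.1 hx'.1 hx.1 h2
    have hd2 : (q:ℤ) ∣ ((l:ℤ) - k) := by
      simp only [hv] at h1
      rw [hcomm] at h1
      exact torus_disj_comp q' q hq' hq B l k x'.2 x.2 (hcomm ▸ hx'.2) (hcomm ▸ hx.2) h1
    have hdd : (((q * q' : ℕ)):ℤ) ∣ ((l:ℤ) - k) := by
      push_cast; exact hcoZ.mul_dvd hd2 hd1
    have : ((l:ℤ) - k) = 0 := Int.eq_zero_of_abs_lt_dvd hdd (by rw [abs_lt]; omega)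
    omega
  -- generic CRT equivalence for one component
  have hcrt : ∀ (A B : ℤ) (i j : ℕ), i < q' → j < q → ∀ k' : ℕ,
      (π ((k' : ℝ) • (((A:ℝ)/q + 1/((q:ℝ)*q'), (B:ℝ)/q' + 1/((q:ℝ)*q')) : ℝ × ℝ)) =
        π ((i : ℝ) / ((q : ℝ) * q'), (j : ℝ) / ((q : ℝ) * q'))) ↔
      ((q':ℤ) ∣ ((k':ℤ) - i) ∧ (q:ℤ) ∣ ((k':ℤ) - j)) := by
    intro A B i j hi hj k'
    simp only [π, projTorus, Prod.mk.injEq, Prod.smul_fst, Prod.smul_snd, smul_eq_mul]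
    rw [torus_comp_iff q q' hq hq' A k' i]
    constructor
    · rintro ⟨hc1, hc2⟩
      refine ⟨hc1, ?_⟩
      rw [hcomm] at hc2
      exact (torus_comp_iff q' q hq' hq B k' j).mp hc2
    · rintro ⟨hc1, hc2⟩
      refine ⟨hc1, ?_⟩
      rw [hcomm]
      exact (torus_comp_iff q' q hq' hq B k' j).mpr hc2
  have hv2 : v₂ = ((((r+p:ℤ):ℝ))/q + 1/((q:ℝ)*q'), (((r'+p':ℤ):ℝ))/q' + 1/((q:ℝ)*q')) := by
    simp only [v₂]; push_cast; rfl
  refine ⟨hdisj r r', ?_, ?_⟩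
  · rw [hv2]
    exact hdisj (r+p) (r'+p')
  · intro i j hi hj
    set k := (Nat.chineseRemainder hco.symm i j : ℕ) with hkdef
    obtain ⟨hk1, hk2⟩ := (Nat.chineseRemainder hco.symm i j).2
    have hklt : k < q * q' := by
      have := Nat.chineseRemainder_lt_mul hco.symm i j hq'.ne' hq.ne'
      rw [Nat.mul_comm] at this
      exact this
    have hkq' : k % q' = i := by
      have h5 : k % q' = i % q' := hk1
      rwa [Nat.mod_eq_of_lt hi] at h5
    have hkq : k % q = j := by
      have h5 : k % q = j % q := hk2
      rwa [Nat.mod_eq_of_lt hj] at h5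
    have main : ∀ (A B : ℤ), ∀ k' : ℕ, k' < q * q' →
        ((π ((k' : ℝ) • (((A:ℝ)/q + 1/((q:ℝ)*q'), (B:ℝ)/q' + 1/((q:ℝ)*q')) : ℝ × ℝ)) =
          π ((i : ℝ) / ((q : ℝ) * q'), (j : ℝ) / ((q : ℝ) * q'))) ↔ k' = k) := by
      intro A B k' hk'
      rw [hcrt A B i j hi hj k']
      constructor
      · rintro ⟨hd1, hd2⟩
        have e1 : (q':ℤ) ∣ ((k:ℤ) - i) := nat_mod_dvd q' k i hkq'
        have e2 : (q:ℤ) ∣ ((k:ℤ) - j) := nat_mod_dvd q k j hkq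
        have d1 : (q':ℤ) ∣ ((k':ℤ) - k) := by
          have h6 := dvd_sub hd1 e1
          have h7 : ((k':ℤ) - i) - ((k:ℤ) - i) = (k':ℤ) - k := by ring
          rwa [h7] at h6
        have d2 : (q:ℤ) ∣ ((k':ℤ) - k) := by
          have h6 := dvd_sub hd2 e2
          have h7 : ((k':ℤ) - j) - ((k:ℤ) - j) = (k':ℤ) - k := by ring
          rwa [h7] at h6
        have hdd : (((q * q' : ℕ)):ℤ) ∣ ((k':ℤ) - k) := by
          push_cast; exact hcoZ.mul_dvd d2 d1
        have h8 : ((k':ℤ) - k) = 0 := Int.eq_zero_of_abs_lt_dvd hdd (by rw [abs_lt]; omega)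
        omega
      · rintro rfl
        exact ⟨nat_mod_dvd q' k i hkq', nat_mod_dvd q k j hkq⟩
    refine ⟨k, hklt, hkq', hkq, ?_, ?_⟩
    · intro k' h
      exact main r r' k' h
    · intro k' h
      rw [hv2]
      exact main (r+p) (r'+p') k' h

end
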